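/- Let H be a partition-connected hypergraph and M(H) its hypergraphic matroid. Then the (unweighted) matroid strength of M(H) equals the partition strength of H: s(M(H)) = S(H), where s(M) = min{ |X|/(r(E) - r(E∖X)) : X ⊆ E, r(E) > r(E∖X) }. -/

import Mathlib

open Finset
open scoped Classical

noncomputable section

variable {V E : Type*}

/-- The set of hyperedges meeting at least two parts of the partition `P` (the cut `δ(P)`). -/
def hcut [Fintype V] [DecidableEq V] [Fintype E] (edge : E → Finset V)
    (P : Finpartition (univ : Finset V)) : Finset E :=
  univ.filter fun e => ∃ p ∈ P.parts, ∃ q ∈ P.parts,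
    p ≠ q ∧ (edge e ∩ p).Nonempty ∧ (edge e ∩ q).Nonempty

/-- The hyperedges entirely contained in the vertex set `X`. -/
def edgesIn [DecidableEq V] [Fintype E] (edge : E → Finset V) (X : Finset V) : Finset E :=
  univ.filter fun e => edge e ⊆ X

/-- The strength `S(H)`. -/
def strength [Fintype V] [DecidableEq V] [Fintype E] (edge : E → Finset V) : ℝ :=
  sInf { r : ℝ | ∃ P : Finpartition (univ : Finset V), 2 ≤ P.parts.card ∧
    r = ((hcut edge P).card : ℝ) / ((P.parts.card : ℝ) - 1) }

/-- The weighted strength `S_σ(H)`. -/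
def strengthW [Fintype V] [DecidableEq V] [Fintype E] (σ : E → ℝ) (edge : E → Finset V) : ℝ :=
  sInf { r : ℝ | ∃ P : Finpartition (univ : Finset V), 2 ≤ P.parts.card ∧
    r = (∑ e ∈ hcut edge P, σ e) / ((P.parts.card : ℝ) - 1) }

/-- The fractional arboricity `D(H)`. -/
def arboricity [Fintype V] [DecidableEq V] [Fintype E] (edge : E → Finset V) : ℝ :=
  sSup { r : ℝ | ∃ X : Finset V, 2 ≤ X.card ∧
    r = ((edgesIn edge X).card : ℝ) / ((X.card : ℝ) - 1) }

/-- Connectivity of the subhypergraph induced by the vertex set `W`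
(only hyperedges contained in `W` are used). -/
def ConnectedIn (edge : E → Finset V) (W : Finset V) : Prop :=
  ∀ X ⊆ W, X.Nonempty → X ≠ W →
    ∃ e, edge e ⊆ W ∧ (edge e ∩ X).Nonempty ∧ ((edge e ∩ W) \ X).Nonempty

/-- Connectivity of the trace hypergraph on the vertex set `W`
(each hyperedge is replaced by its intersection with `W`, as in vertex deletion). -/
def ConnectedOn (edge : E → Finset V) (W : Finset V) : Prop :=
  ∀ X ⊆ W, X.Nonempty → X ≠ W →
    ∃ e, ((edge e ∩ W) ∩ X).Nonempty ∧ ((edge e ∩ W) \ X).Nonempty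

/-- A hypergraph is connected if every nonempty proper vertex subset is crossed by a hyperedge. -/
def HConnected [Fintype V] (edge : E → Finset V) : Prop :=
  ConnectedIn edge univ

/-- `H` is partition-connected if `|δ(P)| ≥ |P| - 1` for every partition `P` of `V`. -/
def PartitionConnected [Fintype V] [DecidableEq V] [Fintype E] (edge : E → Finset V) : Prop :=
  ∀ P : Finpartition (univ : Finset V), P.parts.card - 1 ≤ (hcut edge P).card

/-- A partition is feasible if each part induces a connected subhypergraph. -/
def Feasible [Fintype V] [DecidableEq V] (edge : E → Finset V) (P : Finpartition (univ : Finset V)) : Prop :=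
  ∀ p ∈ P.parts, ConnectedIn edge p

/-- The edges of the shrunk hypergraph `H_P`: vertices are the parts of `P`, and a hyperedge
becomes the set of parts it meets. -/
def shrunkEdge [Fintype V] [DecidableEq V] (edge : E → Finset V)
    (P : Finpartition (univ : Finset V)) (e : E) : Finset {p : Finset V // p ∈ P.parts} :=
  univ.filter fun p => (edge e ∩ p.1).Nonempty

/-- The shrunk hypergraph `H_P` is vertex-biconnected: it is connected and no single
vertex deletion disconnects it. -/
def ShrunkBiconnected [Fintype V] [DecidableEq V] [Fintype E] (edge : E → Finset V)
    (P : Finpartition (univ : Finset V)) : Prop :=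
  ConnectedIn (shrunkEdge edge P) univ ∧
  ∀ p : {p : Finset V // p ∈ P.parts}, ConnectedOn (shrunkEdge edge P) (univ \ {p})

/-- `F` is a hypertree: a hyperforest of size `|V| - 1`. -/
def IsHypertree [Fintype V] [DecidableEq V] (edge : E → Finset V) (F : Finset E) : Prop :=
  F.card = Fintype.card V - 1 ∧
  ∀ X : Finset V, X.Nonempty → (F.filter fun e => edge e ⊆ X).card ≤ X.card - 1

/-- `m` is the multiplicity vector of a multiset of hyperedges forming a hypertree on `V`. -/
def IsMultiTree [Fintype V] [DecidableEq V] [Fintype E] (edge : E → Finset V) (m : E → ℕ) : Prop :=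
  (∑ e, m e) = Fintype.card V - 1 ∧
  ∀ X : Finset V, X.Nonempty → (∑ e ∈ edgesIn edge X, m e) ≤ X.card - 1

/-- The multi-tree family `Ω(H)` as a set of usage vectors in `ℝ^E`. -/
def OmegaSet [Fintype V] [DecidableEq V] [Fintype E] (edge : E → Finset V) : Set (E → ℝ) :=
  { x | ∃ m : E → ℕ, IsMultiTree edge m ∧ x = fun e => (m e : ℝ) }

/-- The hypertree family `Γ(H)` as a set of (indicator) usage vectors in `ℝ^E`. -/
def GammaSet [Fintype V] [DecidableEq V] [Fintype E] (edge : E → Finset V) : Set (E → ℝ) :=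
  { x | ∃ F : Finset E, IsHypertree edge F ∧ x = fun e => if e ∈ F then (1 : ℝ) else 0 }

/-- The admissible set of a family of usage vectors. -/
def AdmSet [Fintype E] (G : Set (E → ℝ)) : Set (E → ℝ) :=
  { ρ | (∀ e, 0 ≤ ρ e) ∧ ∀ x ∈ G, 1 ≤ ∑ e, x e * ρ e }

/-- The weighted 1-modulus of a family of usage vectors. -/
def Mod1 [Fintype E] (σ : E → ℝ) (G : Set (E → ℝ)) : ℝ :=
  sInf { t : ℝ | ∃ ρ ∈ AdmSet G, t = ∑ e, σ e * ρ e }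

/-- `w` is an extreme point of `S`: it lies in `S` and is not the midpoint of two
distinct points of `S`. -/
def IsExtremePt [Fintype E] (S : Set (E → ℝ)) (w : E → ℝ) : Prop :=
  w ∈ S ∧ ∀ y ∈ S, ∀ z ∈ S, (∀ e, w e = (y e + z e) / 2) → y = z

/-- The rank function of the hypergraphic matroid `M(H)` (Frank et al.):
`r(F) = min { |V| - |P| + |δ_F(P)| }` over partitions `P` of `V`. -/
def hrank [Fintype V] [DecidableEq V] [Fintype E] [DecidableEq E]
    (edge : E → Finset V) (F : Finset E) : ℕ :=
  sInf { n : ℕ | ∃ P : Finpartition (univ : Finset V),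
    n = Fintype.card V - P.parts.card + (hcut edge P ∩ F).card }

/-- The (unweighted) strength of the hypergraphic matroid `M(H)`. -/
def mstrength [Fintype V] [DecidableEq V] [Fintype E] [DecidableEq E]
    (edge : E → Finset V) : ℝ :=
  sInf { r : ℝ | ∃ X : Finset E, hrank edge (univ \ X) < hrank edge univ ∧
    r = (X.card : ℝ) / ((hrank edge univ : ℝ) - (hrank edge (univ \ X) : ℝ)) }

/-- The fractional arboricity of the hypergraphic matroid `M(H)`. -/
def marboricity [Fintype V] [DecidableEq V] [Fintype E] [DecidableEq E]
    (edge : E → Finset V) : ℝ :=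
  sSup { r : ℝ | ∃ X : Finset E, 0 < hrank edge X ∧ r = (X.card : ℝ) / (hrank edge X : ℝ) }

end

section Aux
open Finset
open scoped Classical
variable {V E : Type*} [Fintype V] [DecidableEq V] [Fintype E] [DecidableEq E]

lemma hrank_set_nonempty (edge : E → Finset V) (F : Finset E) :
    { n : ℕ | ∃ P : Finpartition (univ : Finset V),
      n = Fintype.card V - P.parts.card + (hcut edge P ∩ F).card }.Nonempty :=
  ⟨_, ⊥, rfl⟩

lemma hrank_le (edge : E → Finset V) (F : Finset E) (P : Finpartition (univ : Finset V)) :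
    hrank edge F ≤ Fintype.card V - P.parts.card + (hcut edge P ∩ F).card :=
  Nat.sInf_le ⟨P, rfl⟩

lemma hrank_witness (edge : E → Finset V) (F : Finset E) :
    ∃ P : Finpartition (univ : Finset V),
      hrank edge F = Fintype.card V - P.parts.card + (hcut edge P ∩ F).card :=
  Nat.sInf_mem (hrank_set_nonempty edge F)

lemma parts_card_le (P : Finpartition (univ : Finset V)) :
    P.parts.card ≤ Fintype.card V := by
  simpa using P.card_parts_le_card

lemma parts_card_zero (P : Finpartition (univ : Finset V))
    (h : P.parts.card = 0) : Fintype.card V = 0 := by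
  rw [Finset.card_eq_zero, P.parts_eq_empty_iff, Finset.bot_eq_empty,
    ← Finset.card_eq_zero] at h
  simpa using h

lemma hrank_univ (edge : E → Finset V) (hpc : PartitionConnected edge) :
    hrank edge univ = Fintype.card V - 1 := by
  apply le_antisymm
  · rcases Nat.eq_zero_or_pos (Fintype.card V) with h0 | h0
    · have hE : IsEmpty V := Fintype.card_eq_zero_iff.mp h0
      have h1 := hrank_le edge univ ⊥
      have h2 : hcut edge (⊥ : Finpartition (univ : Finset V)) = ∅ := by
        ext e
        simp only [hcut, Finset.mem_filter, Finset.mem_univ, true_and,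
          Finset.notMem_empty, iff_false]
        rintro ⟨p, -, q, -, -, ⟨v, -⟩, -⟩
        exact hE.elim v
      rw [h2] at h1
      simp only [Finset.empty_inter, Finset.card_empty] at h1
      omega
    · have huniv : (univ : Finset V).Nonempty := by
        rw [← Finset.card_pos]; simpa using h0
      have := hrank_le edge univ (Finpartition.indiscrete (Finset.nonempty_iff_ne_empty.mp huniv))
      have hcutempty : hcut edge (Finpartition.indiscrete
          (Finset.nonempty_iff_ne_empty.mp huniv)) = ∅ := by
        ext e
        simp only [hcut, Finset.mem_filter, Finset.mem_univ, true_and,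
          Finpartition.indiscrete_parts, Finset.mem_singleton, Finset.notMem_empty, iff_false]
        rintro ⟨p, hp, q, hq, hpq, -⟩
        exact hpq (hp.trans hq.symm)
      rw [hcutempty] at this
      simpa using this
  · apply le_csInf (hrank_set_nonempty edge univ)
    rintro n ⟨P, rfl⟩
    have h1 := parts_card_le P
    have h2 := hpc P
    have h3 : (hcut edge P ∩ univ).card = (hcut edge P).card := by
      rw [Finset.inter_univ]
    have h4 : P.parts.card = 0 → Fintype.card V = 0 := parts_card_zero P
    omega

lemma hrank_drop_le (edge : E → Finset V) (X : Finset E) :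
    hrank edge univ ≤ hrank edge (univ \ X) + X.card := by
  obtain ⟨P, hP⟩ := hrank_witness edge (univ \ X)
  have h1 := hrank_le edge univ P
  have h2 : (hcut edge P ∩ univ).card ≤ (hcut edge P ∩ (univ \ X)).card + X.card := by
    rw [Finset.inter_univ]
    calc (hcut edge P).card
        = (hcut edge P ∩ (univ \ X)).card + (hcut edge P \ (univ \ X)).card :=
          (Finset.card_inter_add_card_sdiff _ _).symm
      _ ≤ (hcut edge P ∩ (univ \ X)).card + X.card := by
          gcongr
          intro e he
          simp only [Finset.mem_sdiff, Finset.mem_univ, true_and, not_not] at he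
          exact he.2
  omega

end Aux

private theorem stmt12aux {V E : Type*} [Fintype V] [DecidableEq V] [Fintype E] [DecidableEq E]
    (edge : E → Finset V) (hpc : PartitionConnected edge) :
    mstrength edge = strength edge := by
  classical
  set MS := { r : ℝ | ∃ X : Finset E, hrank edge (univ \ X) < hrank edge univ ∧
    r = (X.card : ℝ) / ((hrank edge univ : ℝ) - (hrank edge (univ \ X) : ℝ)) } with hMS
  set SS := { r : ℝ | ∃ P : Finpartition (univ : Finset V), 2 ≤ P.parts.card ∧
    r = ((hcut edge P).card : ℝ) / ((P.parts.card : ℝ) - 1) } with hSS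
  have hrU : hrank edge univ = Fintype.card V - 1 := hrank_univ edge hpc
  rcases le_or_gt (Fintype.card V) 1 with hV | hV
  · -- both sets empty
    have hMSe : MS = ∅ := by
      ext r; simp only [hMS, Set.mem_setOf_eq, Set.mem_empty_iff_false, iff_false]
      rintro ⟨X, hX, -⟩
      omega
    have hSSe : SS = ∅ := by
      ext r; simp only [hSS, Set.mem_setOf_eq, Set.mem_empty_iff_false, iff_false]
      rintro ⟨P, hP, -⟩
      have := parts_card_le P
      omega
    rw [mstrength, strength, ← hMS, ← hSS, hMSe, hSSe]
  · -- both sets nonempty, bounded below by 0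
    have hSSne : SS.Nonempty := by
      refine ⟨_, ⊥, ?_, rfl⟩
      rw [Finpartition.card_bot]; simp only [Finset.card_univ]; omega
    have hMSne : MS.Nonempty := by
      refine ⟨_, univ, ?_, rfl⟩
      have h1 : hrank edge (univ \ univ) ≤ 0 := by
        have := hrank_le edge (univ \ univ) ⊥
        simpa [Finpartition.card_bot] using this
      omega
    have hMSbdd : BddBelow MS := by
      refine ⟨0, ?_⟩
      rintro r ⟨X, hX, rfl⟩
      apply div_nonneg (by positivity)
      have : (hrank edge (univ \ X) : ℝ) < (hrank edge univ : ℝ) := by exact_mod_cast hX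
      linarith
    have hSSbdd : BddBelow SS := by
      refine ⟨0, ?_⟩
      rintro r ⟨P, hP, rfl⟩
      apply div_nonneg (by positivity)
      have : (2 : ℝ) ≤ (P.parts.card : ℝ) := by exact_mod_cast hP
      linarith
    rw [mstrength, strength, ← hMS, ← hSS]
    apply le_antisymm
    · -- mstrength ≤ strength
      apply le_csInf hSSne
      rintro r ⟨P, hP2, rfl⟩
      set X := hcut edge P with hX
      have hdropX : hrank edge (univ \ X) ≤ Fintype.card V - P.parts.card := by
        have := hrank_le edge (univ \ X) P
        have hempty : hcut edge P ∩ (univ \ X) = ∅ := by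
          ext e; simp [hX]
        rw [hempty] at this
        simpa using this
      have hPV := parts_card_le P
      have hlt : hrank edge (univ \ X) < hrank edge univ := by omega
      refine le_trans (csInf_le hMSbdd ⟨X, hlt, rfl⟩) ?_
      -- |X|/(rU - rX) ≤ |X|/(|P|-1) since rU - rX ≥ |P|-1
      have hge : ((P.parts.card : ℝ) - 1) ≤
          (hrank edge univ : ℝ) - (hrank edge (univ \ X) : ℝ) := by
        have h1 : hrank edge (univ \ X) + P.parts.card ≤ hrank edge univ + 1 := by omega
        have := (Nat.cast_le (α := ℝ)).mpr h1
        push_cast at this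
        linarith
      have hpos : (0 : ℝ) < (P.parts.card : ℝ) - 1 := by
        have : (2 : ℝ) ≤ (P.parts.card : ℝ) := by exact_mod_cast hP2
        linarith
      exact div_le_div_of_nonneg_left (by positivity) hpos hge
    · -- strength ≤ mstrength
      apply le_csInf hMSne
      rintro r ⟨X, hlt, rfl⟩
      obtain ⟨P, hP⟩ := hrank_witness edge (univ \ X)
      set d := P.parts.card with hd
      set c := (hcut edge P ∩ (univ \ X)).card with hc
      set k := (hcut edge P).card with hk
      set x := X.card with hx
      have hdV : d ≤ Fintype.card V := parts_card_le P
      have hd0 : d = 0 → Fintype.card V = 0 := parts_card_zero P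
      have hpck : d - 1 ≤ k := hpc P
      have hkcx : k ≤ c + x := by
        have : (hcut edge P).card ≤ (hcut edge P ∩ (univ \ X)).card + X.card := by
          calc (hcut edge P).card
              = (hcut edge P ∩ (univ \ X)).card + (hcut edge P \ (univ \ X)).card :=
                (Finset.card_inter_add_card_sdiff _ _).symm
            _ ≤ (hcut edge P ∩ (univ \ X)).card + X.card := by
                gcongr
                intro e he
                simp only [Finset.mem_sdiff, Finset.mem_univ, true_and, not_not] at he
                exact he.2
        exact this
      have hdrople : hrank edge univ ≤ hrank edge (univ \ X) + x := hrank_drop_le edge X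
      -- key numeric facts
      have hd2 : 2 ≤ d := by omega
      have hDpos : 0 < d - 1 - c := by omega
      have hDx : d - 1 - c ≤ x := by omega
      -- k * (d-1-c) ≤ x * (d-1)
      have hkey : k * (d - 1 - c) ≤ x * (d - 1) := by
        calc k * (d - 1 - c) ≤ (c + x) * (d - 1 - c) := by gcongr
          _ = c * (d - 1 - c) + x * (d - 1 - c) := by ring
          _ ≤ c * x + x * (d - 1 - c) := by gcongr
          _ = x * (c + (d - 1 - c)) := by ring
          _ = x * (d - 1) := by congr 1; omega
      have hrdiff : (hrank edge univ : ℝ) - (hrank edge (univ \ X) : ℝ)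
          = ((d - 1 - c : ℕ) : ℝ) := by
        have h1 : hrank edge univ = hrank edge (univ \ X) + (d - 1 - c) := by omega
        rw [h1]; push_cast; ring
      refine le_trans (csInf_le hSSbdd ⟨P, hd2, rfl⟩) ?_
      rw [hrdiff]
      have hd1pos : (0 : ℝ) < (d : ℝ) - 1 := by
        have : (2 : ℝ) ≤ (d : ℝ) := by exact_mod_cast hd2
        linarith
      have hDposR : (0 : ℝ) < ((d - 1 - c : ℕ) : ℝ) := by exact_mod_cast hDpos
      rw [div_le_div_iff₀ hd1pos hDposR]
      calc (k : ℝ) * ((d - 1 - c : ℕ) : ℝ)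
          = ((k * (d - 1 - c) : ℕ) : ℝ) := by push_cast; ring
        _ ≤ ((x * (d - 1) : ℕ) : ℝ) := Nat.cast_le.mpr hkey
        _ = (x : ℝ) * ((d : ℝ) - 1) := by
            rw [Nat.cast_mul, Nat.cast_sub (by omega : 1 ≤ d)]; push_cast; ring

/-- For a partition-connected hypergraph, the (unweighted) strength of the
hypergraphic matroid `M(H)` equals the partition strength of `H`: `s(M(H)) = S(H)`. -/
theorem stmt12 {V E : Type*} [Fintype V] [DecidableEq V] [Fintype E] [DecidableEq E]
    (edge : E → Finset V) (hpc : PartitionConnected edge) :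
    mstrength edge = strength edge := stmt12aux edge hpc
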